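/- Let x = (x_n) and y = (y_n) be sequences of real numbers such that the series ∑_n x_n and ∑_n y_n are absolutely convergent. If every point of E(x,y) has a unique representation, then E(x,y) is a Cantor set, i.e. it is nonempty, compact, perfect and totally disconnected. -/

import Mathlib

open Filter Topology Set

section Aux

variable (f : ℕ → ℝ × ℝ)

/-- Map from Cantor space to subsums. -/
noncomputable def Phi (b : ℕ → Bool) : ℝ × ℝ := ∑' n, if b n then f n else 0

variable {f}

lemma summable_aux (hf : Summable fun n => ‖f n‖) (b : ℕ → Bool) :
    Summable fun n => if b n then f n else 0 := by
  apply Summable.of_norm_bounded hf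
  intro n
  by_cases h : b n <;> simp [h]

lemma Phi_eq (b : ℕ → Bool) : Phi f b = ∑' n : {n | b n = true}, f n := by
  rw [tsum_subtype]
  exact tsum_congr fun n => by by_cases h : b n <;> simp [Set.indicator_apply, h]

open Classical in
lemma Phi_chi (A : Set ℕ) :
    Phi f (fun n => if n ∈ A then true else false) = ∑' n : A, f n := by
  rw [Phi_eq]
  have : {n | (if n ∈ A then true else false) = true} = A := by
    ext n; by_cases h : n ∈ A <;> simp [h]
  rw [this]

lemma continuous_Phi (hf : Summable fun n => ‖f n‖) : Continuous (Phi f) := by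
  apply continuous_tsum (u := fun n => ‖f n‖) _ hf
  · intro n b
    by_cases h : b n <;> simp [h]
  · intro n
    have h1 : Continuous fun b : ℕ → Bool => b n := continuous_apply n
    exact (continuous_of_discreteTopology (f := fun t : Bool => if t then f n else 0)).comp h1

end Aux

/-- The achievement set of a sequence: the set of all subsums. -/
def achievementSet {E : Type*} [AddCommMonoid E] [TopologicalSpace E] (f : ℕ → E) : Set E :=
  {s | ∃ A : Set ℕ, s = ∑' n : A, f n}

lemma range_Phi {f : ℕ → ℝ × ℝ} : Set.range (Phi f) = achievementSet f := by
  classical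
  ext s
  constructor
  · rintro ⟨b, rfl⟩
    exact ⟨{n | b n = true}, Phi_eq b⟩
  · rintro ⟨A, rfl⟩
    exact ⟨fun n => if n ∈ A then true else false, Phi_chi A⟩

theorem stmt_4 (x y : ℕ → ℝ)
    (hx : Summable fun n => |x n|) (hy : Summable fun n => |y n|)
    (huniq : ∀ p ∈ achievementSet (fun n => (x n, y n)),
      ∃! A : Set ℕ, p = ∑' n : A, ((x n, y n) : ℝ × ℝ)) :
    (achievementSet (fun n => (x n, y n))).Nonempty ∧
    IsCompact (achievementSet (fun n => (x n, y n))) ∧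
    Perfect (achievementSet (fun n => (x n, y n))) ∧
    IsTotallyDisconnected (achievementSet (fun n => (x n, y n))) := by
  classical
  set f : ℕ → ℝ × ℝ := fun n => (x n, y n) with hfdef
  have hf : Summable fun n => ‖f n‖ := by
    apply Summable.of_nonneg_of_le (fun n => norm_nonneg _) _ (hx.add hy)
    intro n
    simp only [hfdef, Prod.norm_def, Real.norm_eq_abs]
    exact max_le (le_add_of_nonneg_right (abs_nonneg _)) (le_add_of_nonneg_left (abs_nonneg _))
  -- injectivity of Phi
  have hinj : Function.Injective (Phi f) := by
    intro b b' h
    have hmem : Phi f b ∈ achievementSet f := range_Phi ▸ Set.mem_range_self b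
    obtain ⟨A, -, hA⟩ := huniq _ hmem
    have h1 : {n | b n = true} = {n | b' n = true} := by
      have e1 := hA {n | b n = true} (Phi_eq b)
      have e2 := hA {n | b' n = true} (by rw [h]; exact Phi_eq b')
      rw [e1, e2]
    funext n
    have h2 : (b n = true) ↔ (b' n = true) := Set.ext_iff.mp h1 n
    cases hb : b n <;> cases hb' : b' n <;> simp [hb, hb'] at h2 ⊢
  -- every term is nonzero
  have hne : ∀ n, f n ≠ 0 := by
    intro n h0
    have hz : (0 : ℝ × ℝ) ∈ achievementSet f := ⟨∅, by
      show (0 : ℝ × ℝ) = ∑' m : (∅ : Set ℕ), f m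
      rw [tsum_empty]⟩
    obtain ⟨A, -, hA⟩ := huniq _ hz
    have e1 : (∅ : Set ℕ) = A := hA ∅ (by
      show (0 : ℝ × ℝ) = ∑' m : (∅ : Set ℕ), f m
      rw [tsum_empty])
    have e2 : ({n} : Set ℕ) = A := hA {n} (by
      show (0 : ℝ × ℝ) = ∑' m : ({n} : Set ℕ), f m
      rw [tsum_singleton n f, h0])
    exact (Set.singleton_ne_empty n) (e2.trans e1.symm)
  have hcont : Continuous (Phi f) := continuous_Phi hf
  have hcomp : IsCompact (achievementSet f) := by
    rw [← range_Phi]; exact isCompact_range hcont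
  refine ⟨⟨0, ∅, by
    show (0 : ℝ × ℝ) = ∑' m : (∅ : Set ℕ), f m
    rw [tsum_empty]⟩, hcomp, ?_, ?_⟩
  · -- Perfect
    refine ⟨hcomp.isClosed, fun p hp => ?_⟩
    rw [accPt_iff_nhds]
    intro U hU
    obtain ⟨ε, hε, hball⟩ := Metric.mem_nhds_iff.mp hU
    obtain ⟨b, rfl⟩ : p ∈ Set.range (Phi f) := range_Phi ▸ hp
    have htend : Tendsto (fun n => ‖f n‖) atTop (𝓝 0) := hf.tendsto_atTop_zero
    obtain ⟨n₀, hn₀⟩ := (htend.eventually (eventually_lt_nhds hε)).exists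
    set b' : ℕ → Bool := Function.update b n₀ (!b n₀) with hb'def
    have hbb' : b' ≠ b := by
      intro hcontra
      have := congrFun hcontra n₀
      simp [hb'def, Function.update_self] at this
    have hdiff : Phi f b' - Phi f b = (if b' n₀ then f n₀ else 0) - (if b n₀ then f n₀ else 0) := by
      rw [Phi, Phi, ← Summable.tsum_sub (summable_aux hf b') (summable_aux hf b)]
      refine tsum_eq_single n₀ fun m hm => ?_
      have : b' m = b m := Function.update_of_ne hm _ b
      rw [this, sub_self]
    have hnorm : ‖Phi f b' - Phi f b‖ = ‖f n₀‖ := by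
      rw [hdiff, hb'def]
      cases hb : b n₀ <;> simp [hb, Function.update_self]
    refine ⟨Phi f b', ⟨?_, range_Phi ▸ Set.mem_range_self b'⟩, ?_⟩
    · apply hball
      rw [Metric.mem_ball, dist_eq_norm, hnorm]
      exact hn₀
    · intro hcontra
      exact hbb' (hinj hcontra)
  · -- totally disconnected
    rw [← range_Phi]
    have hemb : IsEmbedding (Phi f) := (hcont.isClosedEmbedding hinj).toIsEmbedding
    rw [hemb.isTotallyDisconnected_range]
    infer_instance
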